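/- Suppose the homogeneous noncommutative polynomial p of degree d with coefficient function P satisfies the compatibility condition, and let A : Fin t → Fin g → ℂ. Then p = ∑_{s : Fin t} (∑_{j : Fin g} A(s,j) • x_j)^d holds in the free algebra FreeAlgebra ℂ (Fin g) if and only if the commutative collapse satisfies p^c = ∑_{s : Fin t} (∑_{j : Fin g} A(s,j) • X_j)^d in MvPolynomial (Fin g) ℂ. In particular, p has a t-term NC Waring decomposition if and only if p^c has a t-term commutative Waring decomposition into d-th powers of linear forms. -/

import Mathlib

open scoped BigOperators

/-- The ordered noncommutative word `x_{α 0} x_{α 1} ⋯ x_{α (d-1)}` in the free algebra. -/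
noncomputable def ncWord {g d : ℕ} (α : Fin d → Fin g) : FreeAlgebra ℂ (Fin g) :=
  (List.ofFn fun i => FreeAlgebra.ι ℂ (α i)).prod

/-- `1_j^α`: the number of indices `i` with `α i = j`. -/
def wordCount {g d : ℕ} (α : Fin d → Fin g) (j : Fin g) : ℕ :=
  (Finset.univ.filter fun i => α i = j).card

lemma expand_pow {R : Type*} [Ring R] [Algebra ℂ R] {g : ℕ} (c : Fin g → ℂ) (v : Fin g → R) :
    ∀ d : ℕ, (∑ j, c j • v j) ^ d
      = ∑ α : Fin d → Fin g, (∏ i, c (α i)) • (List.ofFn fun i => v (α i)).prod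
  | 0 => by simp
  | (d + 1) => by
    have e := Fin.consEquiv (fun _ : Fin (d + 1) => Fin g)
    calc (∑ j, c j • v j) ^ (d + 1)
        = (∑ j, c j • v j) * (∑ j, c j • v j) ^ d := by rw [pow_succ']
      _ = ∑ j, ∑ α : Fin d → Fin g,
            (c j * ∏ i, c (α i)) • (v j * (List.ofFn fun i => v (α i)).prod) := by
          rw [expand_pow c v d, Finset.sum_mul]
          refine Finset.sum_congr rfl fun j _ => ?_
          rw [Finset.mul_sum]
          exact Finset.sum_congr rfl fun α _ => smul_mul_smul_comm _ _ _ _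
      _ = ∑ p : Fin g × (Fin d → Fin g),
            (∏ i, c ((Fin.consEquiv (fun _ : Fin (d + 1) => Fin g)) p i)) •
              (List.ofFn fun i => v ((Fin.consEquiv (fun _ : Fin (d + 1) => Fin g)) p i)).prod := by
          rw [Fintype.sum_prod_type]
          refine Finset.sum_congr rfl fun j _ => Finset.sum_congr rfl fun α _ => ?_
          simp [Fin.consEquiv, Fin.prod_univ_succ, List.ofFn_succ]
      _ = ∑ α : Fin (d + 1) → Fin g,
            (∏ i, c (α i)) • (List.ofFn fun i => v (α i)).prod :=
          Equiv.sum_comp (Fin.consEquiv fun _ : Fin (d + 1) => Fin g)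
            (fun α => (∏ i, c (α i)) • (List.ofFn fun i => v (α i)).prod)

lemma freeMonoid_map_of_prod {X : Type*} (l : List X) :
    (l.map FreeMonoid.of).prod = FreeMonoid.ofList l := by
  induction l with
  | nil => rfl
  | cons a l ih => rw [List.map_cons, List.prod_cons, ih, FreeMonoid.ofList_cons]

lemma equiv_ncWord {g d : ℕ} (α : Fin d → Fin g) :
    FreeAlgebra.equivMonoidAlgebraFreeMonoid (ncWord α)
      = MonoidAlgebra.single (FreeMonoid.ofList (List.ofFn α)) (1 : ℂ) := by
  have h1 : ∀ x : Fin g, FreeAlgebra.equivMonoidAlgebraFreeMonoid (FreeAlgebra.ι ℂ x)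
      = MonoidAlgebra.of ℂ (FreeMonoid (Fin g)) (FreeMonoid.of x) := by
    intro x
    simp [FreeAlgebra.equivMonoidAlgebraFreeMonoid]
  rw [ncWord, map_list_prod]
  rw [List.map_ofFn]
  have h2 : (List.ofFn ((FreeAlgebra.equivMonoidAlgebraFreeMonoid (R := ℂ)) ∘
      fun i => FreeAlgebra.ι ℂ (α i)))
      = List.map (MonoidAlgebra.of ℂ (FreeMonoid (Fin g))) (List.ofFn fun i => FreeMonoid.of (α i)) := by
    rw [List.map_ofFn]
    exact congrArg List.ofFn (funext fun i => h1 (α i))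
  rw [h2, ← map_list_prod]
  have h3 : (List.ofFn fun i => FreeMonoid.of (α i)) = (List.ofFn α).map FreeMonoid.of := by
    rw [List.map_ofFn]; rfl
  rw [h3, freeMonoid_map_of_prod]
  rfl

lemma nc_extract {g d : ℕ} (c : (Fin d → Fin g) → ℂ)
    (h : ∑ α : Fin d → Fin g, c α • ncWord α = 0) (β : Fin d → Fin g) : c β = 0 := by
  have h2 := congrArg (FreeAlgebra.equivMonoidAlgebraFreeMonoid (R := ℂ)) h
  rw [map_sum, map_zero] at h2
  simp only [map_smul, equiv_ncWord] at h2
  have h2' : (∑ α : Fin d → Fin g,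
      c α • Finsupp.single (FreeMonoid.ofList (List.ofFn α)) (1 : ℂ)
      : FreeMonoid (Fin g) →₀ ℂ) = 0 := MonoidAlgebra.ofCoeff_injective (by
        simpa [MonoidAlgebra.ofCoeff_sum, MonoidAlgebra.ofCoeff_smul, MonoidAlgebra.ofCoeff_single] using h2)
  have h3 := DFunLike.congr_fun h2' (FreeMonoid.ofList (List.ofFn β))
  rw [Finsupp.finset_sum_apply] at h3
  simp only [Finsupp.smul_apply, Finsupp.single_apply, Finsupp.coe_zero, Pi.zero_apply] at h3
  rw [Finset.sum_eq_single β] at h3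
  · simpa using h3
  · intro α _ hne
    rw [Finsupp.single_eq_of_ne', smul_zero]
    exact fun hw => hne (List.ofFn_injective (FreeMonoid.ofList.injective hw))
  · simp

lemma m_apply {g d : ℕ} (α : Fin d → Fin g) (j : Fin g) :
    (∑ i : Fin d, Finsupp.single (α i) 1) j = wordCount α j := by
  rw [Finsupp.finset_sum_apply, wordCount]
  simp [Finsupp.single_apply]

lemma prodX {g : ℕ} : ∀ {d : ℕ} (α : Fin d → Fin g),
    (∏ i : Fin d, MvPolynomial.X (α i) : MvPolynomial (Fin g) ℂ)
      = MvPolynomial.monomial (∑ i : Fin d, Finsupp.single (α i) 1) 1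
  | 0, α => by simp
  | (d + 1), α => by
    have hX : (MvPolynomial.X (α 0) : MvPolynomial (Fin g) ℂ)
        = MvPolynomial.monomial (Finsupp.single (α 0) 1) 1 := by
      rw [← pow_one (MvPolynomial.X (α 0)), MvPolynomial.X_pow_eq_monomial]
    rw [Fin.prod_univ_succ, Fin.sum_univ_succ, prodX (fun i => α i.succ), hX,
      MvPolynomial.monomial_mul, mul_one]

lemma prodA {g d : ℕ} (A : Fin g → ℂ) (α : Fin d → Fin g) :
    ∏ i : Fin d, A (α i) = ∏ j : Fin g, A j ^ wordCount α j := by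
  rw [← Finset.prod_fiberwise Finset.univ α fun i => A (α i)]
  refine Finset.prod_congr rfl fun j _ => ?_
  rw [wordCount, ← Finset.prod_const]
  exact Finset.prod_congr rfl fun i hi => by rw [(Finset.mem_filter.1 hi).2]

lemma mv_extract {g d : ℕ} (c : (Fin d → Fin g) → ℂ)
    (hc : ∀ α α' : Fin d → Fin g, (∀ j, wordCount α j = wordCount α' j) → c α = c α')
    (h : ∑ α : Fin d → Fin g,
        c α • (MvPolynomial.monomial (∑ i : Fin d, Finsupp.single (α i) 1) (1 : ℂ)) = 0)
    (β : Fin d → Fin g) : c β = 0 := by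
  classical
  have h3 := congrArg (MvPolynomial.coeff (∑ i : Fin d, Finsupp.single (β i) 1)) h
  simp only [MvPolynomial.coeff_sum, MvPolynomial.coeff_smul, MvPolynomial.coeff_monomial,
    MvPolynomial.coeff_zero, smul_eq_mul, mul_ite, mul_one, mul_zero] at h3
  rw [← Finset.sum_filter] at h3
  have hconst : ∀ α ∈ Finset.univ.filter (fun α : Fin d → Fin g =>
      (∑ i : Fin d, Finsupp.single (α i) 1) = ∑ i : Fin d, Finsupp.single (β i) 1), c α = c β := by
    intro α hα
    refine hc α β fun j => ?_
    have hm := (Finset.mem_filter.1 hα).2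
    rw [← m_apply α j, ← m_apply β j, hm]
  rw [Finset.sum_congr rfl hconst, Finset.sum_const, nsmul_eq_mul] at h3
  have hcard : (Finset.univ.filter (fun α : Fin d → Fin g =>
      (∑ i : Fin d, Finsupp.single (α i) 1) = ∑ i : Fin d, Finsupp.single (β i) 1)).card ≠ 0 := by
    exact Finset.card_ne_zero_of_mem (Finset.mem_filter.2 ⟨Finset.mem_univ β, rfl⟩)
  exact (mul_eq_zero.1 h3).resolve_left (Nat.cast_ne_zero.2 hcard)

lemma key {g d t : ℕ} (P : (Fin d → Fin g) → ℂ)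
    (hcompat : ∀ α α' : Fin d → Fin g,
      (∀ j : Fin g, wordCount α j = wordCount α' j) → P α = P α')
    (A : Fin t → Fin g → ℂ) :
    ((∑ α : Fin d → Fin g, P α • ncWord α)
        = ∑ s : Fin t, (∑ j : Fin g, A s j • FreeAlgebra.ι ℂ j) ^ d)
      ↔ ((∑ α : Fin d → Fin g, P α • ∏ i : Fin d, MvPolynomial.X (α i)
            : MvPolynomial (Fin g) ℂ)
          = ∑ s : Fin t, (∑ j : Fin g, A s j • MvPolynomial.X j) ^ d) := by
  set Q : (Fin d → Fin g) → ℂ := fun α => ∑ s : Fin t, ∏ i : Fin d, A s (α i) with hQ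
  have hQc : ∀ α α' : Fin d → Fin g,
      (∀ j : Fin g, wordCount α j = wordCount α' j) → Q α = Q α' := by
    intro α α' h
    refine Finset.sum_congr rfl fun s _ => ?_
    rw [prodA, prodA]
    exact Finset.prod_congr rfl fun j _ => by rw [h j]
  have hnc : (∑ s : Fin t, (∑ j : Fin g, A s j • FreeAlgebra.ι ℂ j) ^ d)
      = ∑ α : Fin d → Fin g, Q α • ncWord α := by
    simp_rw [expand_pow]
    rw [Finset.sum_comm]
    exact Finset.sum_congr rfl fun α _ => (Finset.sum_smul).symm
  have hmv : (∑ s : Fin t, (∑ j : Fin g, A s j • (MvPolynomial.X j : MvPolynomial (Fin g) ℂ)) ^ d)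
      = ∑ α : Fin d → Fin g, Q α • ∏ i : Fin d, MvPolynomial.X (α i) := by
    simp_rw [expand_pow, List.prod_ofFn]
    rw [Finset.sum_comm]
    exact Finset.sum_congr rfl fun α _ => (Finset.sum_smul).symm
  constructor
  · intro h
    rw [hnc] at h
    have h0 : ∑ α : Fin d → Fin g, (P α - Q α) • ncWord α = 0 := by
      simp_rw [sub_smul]
      rw [Finset.sum_sub_distrib, h, sub_self]
    have hPQ : ∀ α, P α = Q α := fun α => sub_eq_zero.1 (nc_extract _ h0 α)
    rw [hmv]
    exact Finset.sum_congr rfl fun α _ => by rw [hPQ α]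
  · intro h
    rw [hmv] at h
    have h0 : ∑ α : Fin d → Fin g,
        (P α - Q α) • (MvPolynomial.monomial (∑ i : Fin d, Finsupp.single (α i) 1) (1 : ℂ)) = 0 := by
      simp_rw [← prodX, sub_smul]
      rw [Finset.sum_sub_distrib, h, sub_self]
    have hPQ : ∀ α, P α = Q α := fun α => sub_eq_zero.1
      (mv_extract _ (fun α α' hcc => by rw [hcompat α α' hcc, hQc α α' hcc]) h0 α)
    rw [hnc]
    exact Finset.sum_congr rfl fun α _ => by rw [hPQ α]

theorem stmt4 (g d t : ℕ) (hg : 1 ≤ g) (hd : 1 ≤ d) (ht : 1 ≤ t)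
    (P : (Fin d → Fin g) → ℂ)
    (hcompat : ∀ α α' : Fin d → Fin g,
      (∀ j : Fin g, wordCount α j = wordCount α' j) → P α = P α')
    (A : Fin t → Fin g → ℂ) :
    (((∑ α : Fin d → Fin g, P α • ncWord α)
        = ∑ s : Fin t, (∑ j : Fin g, A s j • FreeAlgebra.ι ℂ j) ^ d)
      ↔ ((∑ α : Fin d → Fin g, P α • ∏ i : Fin d, MvPolynomial.X (α i)
            : MvPolynomial (Fin g) ℂ)
          = ∑ s : Fin t, (∑ j : Fin g, A s j • MvPolynomial.X j) ^ d))
    ∧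
    ((∃ B : Fin t → Fin g → ℂ,
        (∑ α : Fin d → Fin g, P α • ncWord α)
          = ∑ s : Fin t, (∑ j : Fin g, B s j • FreeAlgebra.ι ℂ j) ^ d)
      ↔ (∃ B : Fin t → Fin g → ℂ,
          (∑ α : Fin d → Fin g, P α • ∏ i : Fin d, MvPolynomial.X (α i)
              : MvPolynomial (Fin g) ℂ)
            = ∑ s : Fin t, (∑ j : Fin g, B s j • MvPolynomial.X j) ^ d)) := by
  refine ⟨key P hcompat A, ?_⟩
  exact ⟨fun ⟨B, h⟩ => ⟨B, (key P hcompat B).1 h⟩, fun ⟨B, h⟩ => ⟨B, (key P hcompat B).2 h⟩⟩
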